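/- Let k and n be integers with 2 ≤ k ≤ n, and let G be a group such that [γ_k(G), γ_n(G)] = 1 and |x^{γ_n(G)}| ≤ m for every x ∈ G. Then for every integer d with k−1 ≤ d ≤ n and every γ_{n−d+1}-value g ∈ G, one has |g^{γ_d(G)}| ≤ m^{n−d+1}. -/

import Mathlib

/-- The set of conjugates of `x` by elements of `S`: `x^S = {x^s : s ∈ S}`. -/
def conjSet {G : Type*} [Group G] (x : G) (S : Set G) : Set G :=
  (fun s => s⁻¹ * x * s) '' S

/-- The commutator `[a,b] = a⁻¹b⁻¹ab`. -/
def commP {G : Type*} [Group G] (a b : G) : G := a⁻¹ * b⁻¹ * a * b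

/-- `gammaVals G k` is the set of `γ_{k+1}`-values in `G`, i.e. elements of the form
`[x_1,…,x_{k+1}]` (left-normed commutators); so the `γ_c`-values form `gammaVals G (c-1)`. -/
def gammaVals (G : Type*) [Group G] : ℕ → Set G
  | 0 => Set.univ
  | k + 1 => {z | ∃ x ∈ gammaVals G k, ∃ y : G, z = commP x y}

open scoped commutatorElement

/-- `[γ_{i+1}, γ_{j+1}] ≤ γ_{i+j+2}`, in `lowerCentralSeries` indexing. -/
lemma lcs_comm_le (G : Type*) [Group G] (j : ℕ) : ∀ i : ℕ,
    ⁅(⊤ : Subgroup G).lowerCentralSeries i, (⊤ : Subgroup G).lowerCentralSeries j⁆ ≤ (⊤ : Subgroup G).lowerCentralSeries (i + j + 1) := by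
  induction j with
  | zero => intro i; exact le_of_eq rfl
  | succ j ih =>
    intro i
    rw [Subgroup.commutator_comm]
    show ⁅⁅(⊤ : Subgroup G).lowerCentralSeries j, ⊤⁆, (⊤ : Subgroup G).lowerCentralSeries i⁆ ≤ _
    rw [← QuotientGroup.ker_mk' ((⊤ : Subgroup G).lowerCentralSeries (i + (j + 1) + 1)),
      ← Subgroup.map_eq_bot_iff, Subgroup.map_commutator, Subgroup.map_commutator]
    apply Subgroup.commutator_commutator_eq_bot_of_rotate
    · rw [← Subgroup.map_commutator, ← Subgroup.map_commutator, Subgroup.map_eq_bot_iff,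
        QuotientGroup.ker_mk']
      calc ⁅⁅(⊤ : Subgroup G), (⊤ : Subgroup G).lowerCentralSeries i⁆, (⊤ : Subgroup G).lowerCentralSeries j⁆
          = ⁅(⊤ : Subgroup G).lowerCentralSeries (i + 1), (⊤ : Subgroup G).lowerCentralSeries j⁆ := by
            rw [Subgroup.commutator_comm (⊤ : Subgroup G)]; rfl
        _ ≤ (⊤ : Subgroup G).lowerCentralSeries ((i + 1) + j + 1) := ih (i + 1)
        _ = (⊤ : Subgroup G).lowerCentralSeries (i + (j + 1) + 1) := by
            rw [show (i + 1) + j + 1 = i + (j + 1) + 1 by omega]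
    · rw [← Subgroup.map_commutator, ← Subgroup.map_commutator, Subgroup.map_eq_bot_iff,
        QuotientGroup.ker_mk']
      calc ⁅⁅(⊤ : Subgroup G).lowerCentralSeries i, (⊤ : Subgroup G).lowerCentralSeries j⁆, (⊤ : Subgroup G)⁆
          ≤ ⁅(⊤ : Subgroup G).lowerCentralSeries (i + j + 1), (⊤ : Subgroup G)⁆ :=
            Subgroup.commutator_mono (ih i) le_rfl
        _ ≤ (⊤ : Subgroup G).lowerCentralSeries (i + (j + 1) + 1) := le_of_eq rfl

lemma comm_mem_lcs {G : Type*} [Group G] {i j : ℕ} {a b : G}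
    (ha : a ∈ (⊤ : Subgroup G).lowerCentralSeries i) (hb : b ∈ (⊤ : Subgroup G).lowerCentralSeries j) :
    a⁻¹ * b⁻¹ * a * b ∈ (⊤ : Subgroup G).lowerCentralSeries (i + j + 1) := by
  have h : a⁻¹ * b⁻¹ * a * b = ⁅a⁻¹, b⁻¹⁆ := by rw [commutatorElement_def]; group
  rw [h]
  exact lcs_comm_le G j i (Subgroup.commutator_mem_commutator (inv_mem ha) (inv_mem hb))

lemma gammaVals_subset_lcs {G : Type*} [Group G] :
    ∀ j : ℕ, ∀ x ∈ gammaVals G j, x ∈ (⊤ : Subgroup G).lowerCentralSeries j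
  | 0, x, _ => Subgroup.mem_top x
  | j + 1, _, ⟨x, hx, y, rfl⟩ => by
    have hx' := gammaVals_subset_lcs j x hx
    have h : commP x y = ⁅x⁻¹, y⁻¹⁆ := by rw [commutatorElement_def, commP]; group
    rw [h]
    exact Subgroup.commutator_mem_commutator (inv_mem hx') (Subgroup.mem_top _)

lemma gammaVals_conj {G : Type*} [Group G] :
    ∀ j : ℕ, ∀ t : G, ∀ x ∈ gammaVals G j, t⁻¹ * x * t ∈ gammaVals G j
  | 0, _, _, _ => Set.mem_univ _
  | j + 1, t, _, ⟨a, ha, b, rfl⟩ =>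
    ⟨t⁻¹ * a * t, gammaVals_conj j t a ha, t⁻¹ * b * t, by rw [commP, commP]; group⟩

/-- The key commutator identity: if `u = [y,h]`, `z = [x,h]` and `u` commutes with the
three indicated conjugates of `z`, then the conjugate of `g = [x,y]` by `h` can be written
in terms of a conjugate of `y⁻¹xy` by `u` and a conjugate of `x⁻¹y⁻¹x` by `z`. -/
lemma key_identity {G : Type*} [Group G] (x y h u z : G)
    (hu : u = y⁻¹ * h⁻¹ * y * h) (hz : z = x⁻¹ * h⁻¹ * x * h)
    (c1 : Commute u (y⁻¹ * z * y))
    (c2 : Commute u (x * z * x⁻¹))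
    (c3 : Commute u ((commP x y)⁻¹ * z * (commP x y))) :
    h⁻¹ * commP x y * h =
      x⁻¹ * (u⁻¹ * (y⁻¹ * x * y) * u) * ((commP x y)⁻¹ * (z⁻¹ * (x⁻¹ * y⁻¹ * x) * z) * y) := by
  simp only [commP] at c3 ⊢
  have e1 : h⁻¹ * (x⁻¹ * y⁻¹ * x * y) * h =
      z⁻¹ * (x⁻¹ * (u⁻¹ * (y⁻¹ * (x * (z * (y * u)))))) := by
    subst hu hz; group
  rw [e1]
  calc z⁻¹ * (x⁻¹ * (u⁻¹ * (y⁻¹ * (x * (z * (y * u))))))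
      = x⁻¹ * ((x * z * x⁻¹)⁻¹ * (u⁻¹ * ((y⁻¹ * (x * y)) * ((y⁻¹ * z * y) * u)))) := by group
    _ = x⁻¹ * ((x * z * x⁻¹)⁻¹ * (u⁻¹ * ((y⁻¹ * (x * y)) * (u * (y⁻¹ * z * y))))) := by
        rw [← c1.eq]
    _ = x⁻¹ * (((x * z * x⁻¹)⁻¹ * u⁻¹) * ((y⁻¹ * (x * y)) * (u * (y⁻¹ * z * y)))) := by group
    _ = x⁻¹ * ((u⁻¹ * (x * z * x⁻¹)⁻¹) * ((y⁻¹ * (x * y)) * (u * (y⁻¹ * z * y)))) := by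
        rw [← c2.inv_left.inv_right.eq]
    _ = x⁻¹ * (u⁻¹ * ((y⁻¹ * (x * y)) *
          ((((x⁻¹ * y⁻¹ * x * y)⁻¹ * z * (x⁻¹ * y⁻¹ * x * y))⁻¹ * u) * (y⁻¹ * z * y)))) := by
        group
    _ = x⁻¹ * (u⁻¹ * ((y⁻¹ * (x * y)) *
          ((u * ((x⁻¹ * y⁻¹ * x * y)⁻¹ * z * (x⁻¹ * y⁻¹ * x * y))⁻¹) * (y⁻¹ * z * y)))) := by
        rw [← c3.inv_right.eq]
    _ = x⁻¹ * (u⁻¹ * (y⁻¹ * x * y) * u) *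
          ((x⁻¹ * y⁻¹ * x * y)⁻¹ * (z⁻¹ * (x⁻¹ * y⁻¹ * x) * z) * y) := by group

/-- Let `2 ≤ k ≤ n` and let `G` be a group such that `[γ_k(G), γ_n(G)] = 1` and
`|x^{γ_n(G)}| ≤ m` for every `x ∈ G`. Then for every integer `d` with `k-1 ≤ d ≤ n` and
every `γ_{n-d+1}`-value `g ∈ G`, one has `|g^{γ_d(G)}| ≤ m^(n-d+1)`. -/
theorem bounded_conjugates_in_gamma_d (m k n : ℕ) (hk : 2 ≤ k) (hkn : k ≤ n)
    (G : Type*) [Group G]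
    (htriv : (⁅(⊤ : Subgroup G).lowerCentralSeries (k - 1), (⊤ : Subgroup G).lowerCentralSeries (n - 1)⁆ : Subgroup G) = ⊥)
    (hconj : ∀ x : G,
      (conjSet x (((⊤ : Subgroup G).lowerCentralSeries (n - 1) : Subgroup G) : Set G)).Finite ∧
      (conjSet x (((⊤ : Subgroup G).lowerCentralSeries (n - 1) : Subgroup G) : Set G)).ncard ≤ m) :
    ∀ d : ℕ, k - 1 ≤ d → d ≤ n →
      ∀ g ∈ gammaVals G (n - d),
        (conjSet g (((⊤ : Subgroup G).lowerCentralSeries (d - 1) : Subgroup G) : Set G)).Finite ∧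
        (conjSet g (((⊤ : Subgroup G).lowerCentralSeries (d - 1) : Subgroup G) : Set G)).ncard ≤
          m ^ (n - d + 1) := by
  -- elements of `γ_k` commute with elements of `γ_n`
  have comm_uv : ∀ a b : G, a ∈ (⊤ : Subgroup G).lowerCentralSeries (k - 1) →
      b ∈ (⊤ : Subgroup G).lowerCentralSeries (n - 1) → Commute a b := by
    intro a b ha hb
    have h1 : ⁅a, b⁆ ∈ (⊥ : Subgroup G) := htriv ▸ Subgroup.commutator_mem_commutator ha hb
    exact commutatorElement_eq_one_iff_commute.mp (Subgroup.mem_bot.mp h1)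
  -- `γ_n` is normal
  have hconjN : ∀ t w : G, w ∈ (⊤ : Subgroup G).lowerCentralSeries (n - 1) →
      t⁻¹ * w * t ∈ (⊤ : Subgroup G).lowerCentralSeries (n - 1) := by
    intro t w hw
    have := (Subgroup.lowerCentralSeries_normal (⊤ : Subgroup G) (n - 1)).conj_mem w hw t⁻¹
    simpa using this
  have H : ∀ j : ℕ, j ≤ n - (k - 1) → ∀ g ∈ gammaVals G j,
      (conjSet g (((⊤ : Subgroup G).lowerCentralSeries (n - j - 1) : Subgroup G) : Set G)).Finite ∧
      (conjSet g (((⊤ : Subgroup G).lowerCentralSeries (n - j - 1) : Subgroup G) : Set G)).ncard ≤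
        m ^ (j + 1) := by
    intro j
    induction j with
    | zero =>
      intro _ g _
      simpa [Nat.sub_zero, pow_one] using hconj g
    | succ j ih =>
      intro hj g hg
      obtain ⟨x, hx, y, rfl⟩ := hg
      rw [show n - (j + 1) - 1 = n - j - 2 by omega]
      -- the two auxiliary conjugacy sets
      set S₁ := conjSet (y⁻¹ * x * y)
        (((⊤ : Subgroup G).lowerCentralSeries (n - j - 1) : Subgroup G) : Set G) with hS₁def
      set S₂ := conjSet (x⁻¹ * y⁻¹ * x)
        (((⊤ : Subgroup G).lowerCentralSeries (n - 1) : Subgroup G) : Set G) with hS₂def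
      have hS₁ := ih (by omega) (y⁻¹ * x * y) (gammaVals_conj j y x hx)
      have hS₂ := hconj (x⁻¹ * y⁻¹ * x)
      -- the inclusion into the image of the product set
      have hsub : conjSet (commP x y)
            (((⊤ : Subgroup G).lowerCentralSeries (n - j - 2) : Subgroup G) : Set G) ⊆
          (fun p : G × G => x⁻¹ * p.1 * ((commP x y)⁻¹ * p.2 * y)) '' (S₁ ×ˢ S₂) := by
        rintro w ⟨h, hh, rfl⟩
        have hh' : h ∈ (⊤ : Subgroup G).lowerCentralSeries (n - j - 2) := hh
        have hzmem : x⁻¹ * h⁻¹ * x * h ∈ (⊤ : Subgroup G).lowerCentralSeries (n - 1) := by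
          have := comm_mem_lcs (gammaVals_subset_lcs j x hx) hh'
          rwa [show j + (n - j - 2) + 1 = n - 1 by omega] at this
        have humem : y⁻¹ * h⁻¹ * y * h ∈ (⊤ : Subgroup G).lowerCentralSeries (n - j - 1) := by
          have hy0 : y ∈ (⊤ : Subgroup G).lowerCentralSeries 0 := Subgroup.mem_top y
          have := comm_mem_lcs hy0 hh'
          rwa [show 0 + (n - j - 2) + 1 = n - j - 1 by omega] at this
        have huk : y⁻¹ * h⁻¹ * y * h ∈ (⊤ : Subgroup G).lowerCentralSeries (k - 1) :=
          Subgroup.lowerCentralSeries_antitone ⊤ (by omega) humem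
        have c1 : Commute (y⁻¹ * h⁻¹ * y * h)
            (y⁻¹ * (x⁻¹ * h⁻¹ * x * h) * y) :=
          comm_uv _ _ huk (hconjN y _ hzmem)
        have c2 : Commute (y⁻¹ * h⁻¹ * y * h)
            (x * (x⁻¹ * h⁻¹ * x * h) * x⁻¹) :=
          comm_uv _ _ huk (by simpa using hconjN x⁻¹ _ hzmem)
        have c3 : Commute (y⁻¹ * h⁻¹ * y * h)
            ((commP x y)⁻¹ * (x⁻¹ * h⁻¹ * x * h) * (commP x y)) :=
          comm_uv _ _ huk (hconjN (commP x y) _ hzmem)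
        refine ⟨((y⁻¹ * h⁻¹ * y * h)⁻¹ * (y⁻¹ * x * y) * (y⁻¹ * h⁻¹ * y * h),
            (x⁻¹ * h⁻¹ * x * h)⁻¹ * (x⁻¹ * y⁻¹ * x) * (x⁻¹ * h⁻¹ * x * h)),
          ⟨⟨y⁻¹ * h⁻¹ * y * h, humem, rfl⟩, ⟨x⁻¹ * h⁻¹ * x * h, hzmem, rfl⟩⟩, ?_⟩
        exact (key_identity x y h _ _ rfl rfl c1 c2 c3).symm
      have hfinP : (S₁ ×ˢ S₂).Finite := hS₁.1.prod hS₂.1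
      have hfinI : ((fun p : G × G => x⁻¹ * p.1 * ((commP x y)⁻¹ * p.2 * y)) ''
          (S₁ ×ˢ S₂)).Finite := hfinP.image _
      refine ⟨hfinI.subset hsub, ?_⟩
      have hprodcard : (S₁ ×ˢ S₂).ncard = S₁.ncard * S₂.ncard := by
        rw [← Nat.card_coe_set_eq, ← Nat.card_coe_set_eq, ← Nat.card_coe_set_eq]
        exact (Nat.card_congr (Equiv.Set.prod S₁ S₂)).trans (Nat.card_prod _ _)
      calc (conjSet (commP x y)
              (((⊤ : Subgroup G).lowerCentralSeries (n - j - 2) : Subgroup G) : Set G)).ncard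
          ≤ ((fun p : G × G => x⁻¹ * p.1 * ((commP x y)⁻¹ * p.2 * y)) ''
              (S₁ ×ˢ S₂)).ncard := Set.ncard_le_ncard hsub hfinI
        _ ≤ (S₁ ×ˢ S₂).ncard := Set.ncard_image_le hfinP
        _ = S₁.ncard * S₂.ncard := hprodcard
        _ ≤ m ^ (j + 1) * m := Nat.mul_le_mul hS₁.2 hS₂.2
        _ = m ^ (j + 1 + 1) := (pow_succ m (j + 1)).symm
  intro d hd1 hd2 g hg
  have := H (n - d) (Nat.sub_le_sub_left hd1 n) g hg
  rwa [show n - (n - d) - 1 = d - 1 by omega, show n - d + 1 = n - d + 1 from rfl] at this
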